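/- arXiv:1301.1076 — 5 statements merged into one kernel-verified Lean document; each statement's English description precedes it below -/
import Mathlib

section
/- Let G be a group and let ρ, φ : G → ℤ/2ℤ be group homomorphisms (to the additive group of the field 𝔽₂). Let K = ker(ρ) and let X²(K) be the subgroup of G generated by the squares of all elements of K; X²(K) is a normal subgroup of G, and ρ and φ induce homomorphisms ρ̄, φ̄ on the quotient Q = G/X²(K). Then there exists a function F : G → ℤ/2ℤ with ρ(g)φ(h) = F(gh) + F(g) + F(h) for all g, h ∈ G if and only if there exists a function F̄ : Q → ℤ/2ℤ with ρ̄(x)φ̄(y) = F̄(xy) + F̄(x) + F̄(y) for all x, y ∈ Q. -/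
/-- `X²(K)`: the subgroup generated by the squares of all elements of `K`. -/
def sqSubgroup {G : Type*} [Group G] (K : Subgroup G) : Subgroup G :=
  Subgroup.closure ((fun k => k ^ 2) '' (K : Set G))

/-- If `K` is normal in `G` then `X²(K)`, being characteristic in `K`, is normal in `G`. -/
instance sqSubgroup_normal {G : Type*} [Group G] (K : Subgroup G) [hK : K.Normal] :
    (sqSubgroup K).Normal := by
  constructor
  intro n hn g
  have h1 : (MulAut.conj g).toMonoidHom n ∈
      (sqSubgroup K).map (MulAut.conj g).toMonoidHom :=
    Subgroup.mem_map_of_mem _ hn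
  rw [sqSubgroup, MonoidHom.map_closure] at h1
  have h2 : Subgroup.closure ((MulAut.conj g).toMonoidHom ''
      ((fun k => k ^ 2) '' (K : Set G))) ≤ sqSubgroup K := by
    apply (Subgroup.closure_le _).mpr
    rintro _ ⟨_, ⟨k, hk, rfl⟩, rfl⟩
    apply Subgroup.subset_closure
    exact ⟨(MulAut.conj g) k, hK.conj_mem k hk g, (map_pow (MulAut.conj g) k 2).symm⟩
  simpa using h2 h1

/-- for homomorphisms `ρ, φ : G → ℤ/2ℤ`, with `K = ker ρ` and
`Q = G/X²(K)`, and `ρ̄, φ̄` the induced homomorphisms on `Q`, the 2-cocycle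
`(g,h) ↦ ρ(g)φ(h)` is a coboundary on `G` iff the corresponding 2-cocycle
`(x,y) ↦ ρ̄(x)φ̄(y)` is a coboundary on `Q`. -/
theorem stmt2 (G : Type*) [Group G] (ρ φ : G →* Multiplicative (ZMod 2))
    (ρbar φbar : G ⧸ sqSubgroup ρ.ker →* Multiplicative (ZMod 2))
    (hρbar : ∀ g : G, ρbar (QuotientGroup.mk g) = ρ g)
    (hφbar : ∀ g : G, φbar (QuotientGroup.mk g) = φ g) :
    (∃ F : G → ZMod 2, ∀ g h : G,
        Multiplicative.toAdd (ρ g) * Multiplicative.toAdd (φ h) = F (g * h) + F g + F h) ↔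
    (∃ Fbar : G ⧸ sqSubgroup ρ.ker → ZMod 2, ∀ x y : G ⧸ sqSubgroup ρ.ker,
        Multiplicative.toAdd (ρbar x) * Multiplicative.toAdd (φbar y) =
          Fbar (x * y) + Fbar x + Fbar y) := by
  have two : ∀ x : ZMod 2, x + x = 0 := by decide
  constructor
  · rintro ⟨F, hF⟩
    -- φ vanishes (additively) on the square subgroup
    have hφN : ∀ n ∈ sqSubgroup ρ.ker, Multiplicative.toAdd (φ n) = 0 := by
      intro n hn
      refine Subgroup.closure_induction ?_ ?_ ?_ ?_ hn
      · rintro _ ⟨k, hk, rfl⟩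
        show Multiplicative.toAdd (φ (k ^ 2)) = 0
        rw [pow_two, map_mul, toAdd_mul, two]
      · simp
      · intro x y _ _ hx hy
        rw [map_mul, toAdd_mul, hx, hy, add_zero]
      · intro x _ hx
        rw [map_inv, toAdd_inv, hx, neg_zero]
    -- F vanishes on the square subgroup
    have hF1 : F 1 = 0 := by
      have key : ∀ a : ZMod 2, (0 : ZMod 2) = a + a + a → a = 0 := by decide
      have := hF 1 1
      simp only [map_one, toAdd_one, mul_one, one_mul, zero_mul] at this
      exact key _ this
    have hFker : ∀ g h : G, g ∈ ρ.ker → F (g * h) = F g + F h := by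
      intro g h hg
      have := hF g h
      rw [MonoidHom.mem_ker.mp hg, toAdd_one, zero_mul] at this
      have key : ∀ a b c : ZMod 2, (0 : ZMod 2) = a + b + c → a = b + c := by decide
      exact key _ _ _ this
    have hFN : ∀ n ∈ sqSubgroup ρ.ker, n ∈ ρ.ker ∧ F n = 0 := by
      intro n hn
      refine Subgroup.closure_induction ?_ ?_ ?_ ?_ hn
      · rintro _ ⟨k, hk, rfl⟩
        refine ⟨ρ.ker.pow_mem hk 2, ?_⟩
        show F (k ^ 2) = 0
        rw [pow_two, hFker k k hk, two]
      · exact ⟨ρ.ker.one_mem, hF1⟩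
      · rintro x y _ _ ⟨hx1, hx2⟩ ⟨hy1, hy2⟩
        exact ⟨ρ.ker.mul_mem hx1 hy1, by rw [hFker x y hx1, hx2, hy2, add_zero]⟩
      · rintro x _ ⟨hx1, hx2⟩
        refine ⟨ρ.ker.inv_mem hx1, ?_⟩
        have := hFker x x⁻¹ hx1
        rw [mul_inv_cancel, hF1, hx2, zero_add] at this
        exact this.symm
    -- F is constant on cosets
    have hconst : ∀ a b : G, (a : G ⧸ sqSubgroup ρ.ker) = b → F a = F b := by
      intro a b hab
      have hn : a⁻¹ * b ∈ sqSubgroup ρ.ker := (QuotientGroup.eq).mp hab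
      have hb : b = a * (a⁻¹ * b) := by group
      have := hF a (a⁻¹ * b)
      rw [hφN _ hn, mul_zero, (hFN _ hn).2, add_zero] at this
      have key : ∀ a b : ZMod 2, (0 : ZMod 2) = a + b → b = a := by decide
      rw [hb]
      exact key _ _ this
    refine ⟨Quotient.lift F (fun a b h => hconst a b (Quotient.sound h)), ?_⟩
    intro x y
    refine QuotientGroup.induction_on x (fun g => QuotientGroup.induction_on y (fun h => ?_))
    have : (QuotientGroup.mk g : G ⧸ sqSubgroup ρ.ker) * QuotientGroup.mk h
        = QuotientGroup.mk (g * h) := rfl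
    rw [this, hρbar, hφbar]
    exact hF g h
  · rintro ⟨Fbar, hFbar⟩
    refine ⟨fun g => Fbar (QuotientGroup.mk g), fun g h => ?_⟩
    have := hFbar (QuotientGroup.mk g) (QuotientGroup.mk h)
    rw [hρbar, hφbar] at this
    exact this
end

section
/- Let E be the group with presentation ⟨t, u, v | t² = 1, u² = v², tut⁻¹ = u⁻¹, tv = vt, uv = vu⟩ (a 2-group of order 16). Let T, U, V : E → ℤ/2ℤ be the group homomorphisms determined by T(t) = 1, T(u) = T(v) = 0; U(u) = 1, U(t) = U(v) = 0; V(v) = 1, V(t) = V(u) = 0. Then TU + U² + V² = 0 in H²(E; 𝔽₂); explicitly, there exists a function F : E → ℤ/2ℤ such that T(g)U(h) + U(g)U(h) + V(g)V(h) = F(gh) + F(g) + F(h) for all g, h ∈ E. -/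
/-- The relators of the "almost extraspecial" 2-group
`E = ⟨t, u, v | t² = 1, u² = v², tut⁻¹ = u⁻¹, tv = vt, uv = vu⟩`,
with generators `t = 0`, `u = 1`, `v = 2`. -/
def Erels : Set (FreeGroup (Fin 3)) :=
  { (FreeGroup.of 0) ^ 2,
    (FreeGroup.of 1) ^ 2 * ((FreeGroup.of 2) ^ 2)⁻¹,
    FreeGroup.of 0 * FreeGroup.of 1 * (FreeGroup.of 0)⁻¹ * FreeGroup.of 1,
    FreeGroup.of 0 * FreeGroup.of 2 * (FreeGroup.of 0)⁻¹ * (FreeGroup.of 2)⁻¹,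
    FreeGroup.of 1 * FreeGroup.of 2 * (FreeGroup.of 1)⁻¹ * (FreeGroup.of 2)⁻¹ }

/-- A concrete model of the almost extraspecial group of order 16: elements are
normal forms `u^b v^c z^d t^a` where `z = u² = v²` is central. -/
structure G4 where
  a : Bool
  b : Bool
  c : Bool
  d : Bool
  deriving DecidableEq

instance : Mul G4 :=
  ⟨fun x y => ⟨xor x.a y.a, xor x.b y.b, xor x.c y.c,
    xor (xor x.d y.d) (xor (x.a && y.b) (xor (x.b && y.b) (x.c && y.c)))⟩⟩
instance : One G4 := ⟨⟨false, false, false, false⟩⟩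
instance : Inv G4 :=
  ⟨fun x => ⟨x.a, x.b, x.c, xor x.d (xor (x.a && x.b) (xor x.b x.c))⟩⟩

lemma g4_one_mul : ∀ x : G4, 1 * x = x := by
  rintro ⟨a,b,c,d⟩; revert a b c d; decide
lemma g4_mul_one : ∀ x : G4, x * 1 = x := by
  rintro ⟨a,b,c,d⟩; revert a b c d; decide
lemma g4_assoc : ∀ x y z : G4, x * y * z = x * (y * z) := by
  rintro ⟨a,b,c,d⟩ ⟨a',b',c',d'⟩ ⟨a'',b'',c'',d''⟩
  revert a b c d a' b' c' d' a'' b'' c'' d''; decide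
lemma g4_inv_mul : ∀ x : G4, x⁻¹ * x = 1 := by
  rintro ⟨a,b,c,d⟩; revert a b c d; decide

instance : Group G4 where
  mul_assoc := g4_assoc
  one_mul := g4_one_mul
  mul_one := g4_mul_one
  inv_mul_cancel := g4_inv_mul

/-- Bool to `ZMod 2`. -/
def b2z (x : Bool) : ZMod 2 := if x then 1 else 0

/-- Images of the generators `t, u, v` in the concrete model. -/
def G4f : Fin 3 → G4 :=
  ![⟨true, false, false, false⟩, ⟨false, true, false, false⟩, ⟨false, false, true, false⟩]

lemma G4rels : ∀ r ∈ Erels, FreeGroup.lift G4f r = 1 := by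
  intro r hr
  rcases hr with h | h | h | h | h <;> subst h <;>
    simp only [map_mul, map_inv, map_pow, FreeGroup.lift_apply_of] <;> decide

/-- The canonical map from the presented group to the concrete model. -/
def φE : PresentedGroup Erels →* G4 := PresentedGroup.toGroup G4rels

def pa : G4 →* Multiplicative (ZMod 2) where
  toFun x := Multiplicative.ofAdd (b2z x.a)
  map_one' := rfl
  map_mul' x y := by
    rcases x with ⟨a,b,c,d⟩; rcases y with ⟨a',b',c',d'⟩; revert a b c d a' b' c' d'; decide

def pb : G4 →* Multiplicative (ZMod 2) where
  toFun x := Multiplicative.ofAdd (b2z x.b)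
  map_one' := rfl
  map_mul' x y := by
    rcases x with ⟨a,b,c,d⟩; rcases y with ⟨a',b',c',d'⟩; revert a b c d a' b' c' d'; decide

def pc : G4 →* Multiplicative (ZMod 2) where
  toFun x := Multiplicative.ofAdd (b2z x.c)
  map_one' := rfl
  map_mul' x y := by
    rcases x with ⟨a,b,c,d⟩; rcases y with ⟨a',b',c',d'⟩; revert a b c d a' b' c' d'; decide

lemma g4_key : ∀ x y : G4,
    b2z x.a * b2z y.b + b2z x.b * b2z y.b + b2z x.c * b2z y.c =
      b2z (x * y).d + b2z x.d + b2z y.d := by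
  rintro ⟨a,b,c,d⟩ ⟨a',b',c',d'⟩
  revert a b c d a' b' c' d'; decide

/-- in the almost extraspecial 2-group `E`, with `T, U, V : E → ℤ/2ℤ`
the homomorphisms dual to the generators `t, u, v`, the relation `TU + U² + V² = 0`
holds in `H²(E; 𝔽₂)`: the 2-cocycle `(g,h) ↦ T(g)U(h) + U(g)U(h) + V(g)V(h)` is a
coboundary. -/
theorem stmt5 (T U V : PresentedGroup Erels →* Multiplicative (ZMod 2))
    (hT0 : T (PresentedGroup.of 0) = Multiplicative.ofAdd 1)
    (hT1 : T (PresentedGroup.of 1) = Multiplicative.ofAdd 0)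
    (hT2 : T (PresentedGroup.of 2) = Multiplicative.ofAdd 0)
    (hU0 : U (PresentedGroup.of 0) = Multiplicative.ofAdd 0)
    (hU1 : U (PresentedGroup.of 1) = Multiplicative.ofAdd 1)
    (hU2 : U (PresentedGroup.of 2) = Multiplicative.ofAdd 0)
    (hV0 : V (PresentedGroup.of 0) = Multiplicative.ofAdd 0)
    (hV1 : V (PresentedGroup.of 1) = Multiplicative.ofAdd 0)
    (hV2 : V (PresentedGroup.of 2) = Multiplicative.ofAdd 1) :
    ∃ F : PresentedGroup Erels → ZMod 2, ∀ g h : PresentedGroup Erels,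
      Multiplicative.toAdd (T g) * Multiplicative.toAdd (U h) +
        Multiplicative.toAdd (U g) * Multiplicative.toAdd (U h) +
        Multiplicative.toAdd (V g) * Multiplicative.toAdd (V h) =
      F (g * h) + F g + F h := by
  have hT : T = pa.comp φE := by
    ext x
    fin_cases x <;>
      simp only [MonoidHom.comp_apply, φE, PresentedGroup.toGroup.of] <;>
      · first
        | exact (congrArg Multiplicative.toAdd hT0).trans (by decide)
        | exact (congrArg Multiplicative.toAdd hT1).trans (by decide)
        | exact (congrArg Multiplicative.toAdd hT2).trans (by decide)
  have hU : U = pb.comp φE := by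
    ext x
    fin_cases x <;>
      simp only [MonoidHom.comp_apply, φE, PresentedGroup.toGroup.of] <;>
      · first
        | exact (congrArg Multiplicative.toAdd hU0).trans (by decide)
        | exact (congrArg Multiplicative.toAdd hU1).trans (by decide)
        | exact (congrArg Multiplicative.toAdd hU2).trans (by decide)
  have hV : V = pc.comp φE := by
    ext x
    fin_cases x <;>
      simp only [MonoidHom.comp_apply, φE, PresentedGroup.toGroup.of] <;>
      · first
        | exact (congrArg Multiplicative.toAdd hV0).trans (by decide)
        | exact (congrArg Multiplicative.toAdd hV1).trans (by decide)
        | exact (congrArg Multiplicative.toAdd hV2).trans (by decide)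
  refine ⟨fun g => b2z (φE g).d, fun g h => ?_⟩
  subst hT hU hV
  simp only [MonoidHom.comp_apply, map_mul, pa, pb, pc, MonoidHom.coe_mk, OneHom.coe_mk,
    toAdd_ofAdd]
  exact g4_key (φE g) (φE h)
end

section
/- Let k, m, n be integers with mn ≠ 0, and suppose the matrix P = ((2k+1, 2m), (2n, 2k+1)) lies in SL(2,ℤ), i.e. (2k+1)² − 4mn = 1. Then k(k+1) = mn, and there exist integers m₁, m₂, n₁, n₂ such that m = m₁m₂, n = n₁n₂, k = m₁n₁ and k + 1 = m₂n₂. -/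
/-- If `m n ≠ 0` and `P = ((2k+1, 2m), (2n, 2k+1)) ∈ SL(2,ℤ)`,
then `k(k+1) = mn` and the factorization splits: `m = m₁m₂`, `n = n₁n₂`,
`k = m₁n₁`, `k + 1 = m₂n₂`. -/
theorem stmt8 (k m n : ℤ) (hmn : m * n ≠ 0)
    (hdet : (Matrix.of !![2 * k + 1, 2 * m; 2 * n, 2 * k + 1]).det = 1) :
    k * (k + 1) = m * n ∧
      ∃ m₁ m₂ n₁ n₂ : ℤ, m = m₁ * m₂ ∧ n = n₁ * n₂ ∧ k = m₁ * n₁ ∧ k + 1 = m₂ * n₂ := by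
  have key : k * (k + 1) = m * n := by
    rw [Matrix.det_fin_two] at hdet
    change (2 * k + 1) * (2 * k + 1) - (2 * m) * (2 * n) = 1 at hdet
    nlinarith [hdet]
  refine ⟨key, ?_⟩
  have hm : m ≠ 0 := left_ne_zero_of_mul hmn
  have hk : k ≠ 0 := by
    rintro rfl
    exact hmn (by linarith : m * n = 0)
  set d : ℤ := (Int.gcd m k : ℤ) with hd
  have hdpos : 0 < Int.gcd m k := Int.gcd_pos_of_ne_zero_left k hm
  have hd0 : d ≠ 0 := by positivity
  obtain ⟨m₂, hm₂⟩ : d ∣ m := Int.gcd_dvd_left m k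
  obtain ⟨n₁, hn₁⟩ : d ∣ k := Int.gcd_dvd_right m k
  have hcop : IsCoprime m₂ n₁ := by
    rw [Int.isCoprime_iff_gcd_eq_one]
    have h := Int.gcd_div_gcd_div_gcd (i := m) (j := k) hdpos
    have e1 : m / d = m₂ := by rw [hm₂, Int.mul_ediv_cancel_left _ hd0]
    have e2 : k / d = n₁ := by rw [hn₁, Int.mul_ediv_cancel_left _ hd0]
    rwa [← hd, e1, e2] at h
  have hn1 : n₁ ≠ 0 := by
    rintro rfl
    exact hk (by simpa using hn₁)
  have heq : n₁ * (k + 1) = m₂ * n := by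
    have : d * (n₁ * (k + 1)) = d * (m₂ * n) := by
      rw [← mul_assoc, ← mul_assoc, ← hn₁, ← hm₂]; exact key
    exact mul_left_cancel₀ hd0 this
  obtain ⟨n₂, hn₂⟩ : n₁ ∣ n := by
    have : n₁ ∣ m₂ * n := ⟨k + 1, heq.symm⟩
    exact hcop.symm.dvd_of_dvd_mul_left this
  refine ⟨d, m₂, n₁, n₂, hm₂, hn₂, hn₁, ?_⟩
  have : n₁ * (k + 1) = n₁ * (m₂ * n₂) := by
    rw [heq, hn₂]; ring
  exact mul_left_cancel₀ hn1 this
end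

section
/- For an integer t, the following are equivalent: (i) there exist integers a, b, c, d with ad − bc = 1 or ad − bc = −1, abcd ≠ 0, and t = 2(ad − bc)(ad + bc); (ii) |t| > 2 and t ≡ 2 (mod 4). -/
/-- For an integer `t`, there exist integers `a, b, c, d` with
`ad − bc = ±1`, `abcd ≠ 0` and `t = 2(ad − bc)(ad + bc)` if and only if
`|t| > 2` and `t ≡ 2 (mod 4)`. -/
theorem stmt9 (t : ℤ) :
    (∃ a b c d : ℤ, (a * d - b * c = 1 ∨ a * d - b * c = -1) ∧
        a * b * c * d ≠ 0 ∧ t = 2 * (a * d - b * c) * (a * d + b * c)) ↔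
      (2 < |t| ∧ t ≡ 2 [ZMOD 4]) := by
  constructor
  · rintro ⟨a, b, c, d, hη, h0, ht⟩
    have hp : a * d ≠ 0 := by
      intro h
      apply h0
      rcases mul_eq_zero.1 h with h | h <;> simp [h]
    have hq : b * c ≠ 0 := by
      intro h
      apply h0
      rcases mul_eq_zero.1 h with h | h <;> simp [h]
    obtain ⟨p, hp'⟩ : ∃ p, p = a * d := ⟨_, rfl⟩
    obtain ⟨q, hq'⟩ : ∃ q, q = b * c := ⟨_, rfl⟩
    rw [← hp'] at hη ht hp
    rw [← hq'] at hη ht hq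
    constructor
    · rw [lt_abs]
      rcases hη with h | h <;> rw [h] at ht <;> omega
    · show t % 4 = 2 % 4
      rcases hη with h | h <;> rw [h] at ht <;> omega
  · rintro ⟨h1, h2⟩
    obtain ⟨m, hm⟩ : (4:ℤ) ∣ 2 - t := h2.dvd
    rw [lt_abs] at h1
    refine ⟨-m + 1, -m, 1, 1, Or.inl (by ring), ?_, ?_⟩
    · simp only [mul_one]
      intro hz
      rcases mul_eq_zero.1 hz with hz | hz <;> omega
    · have : t = 2 - 4 * m := by omega
      rw [this]; ring
end

section
/- Let Θ = ((a, c), (b, d)) ∈ GL(2,ℤ) (so ad − bc = ±1), and let π_Θ = ℤ² ⋊_Θ ℤ be the semidirect product in which the generator of ℤ acts on ℤ² by Θ. Let Δ₁ = det(Θ − I₂) = (a−1)(d−1) − bc and let Δ₂ = gcd(a−1, b, c, d−1). If Δ₁ ≠ 0, then the abelianization of π_Θ is isomorphic to ℤ ⊕ ℤ/(|Δ₁|/Δ₂)ℤ ⊕ ℤ/Δ₂ℤ. -/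
/-- The additive automorphism of `ℤ²` given by a matrix `Θ ∈ GL(2,ℤ)`. -/
def thetaAddAut (Θ : GL (Fin 2) ℤ) : (Fin 2 → ℤ) ≃+ (Fin 2 → ℤ) where
  toFun v := (Θ : Matrix (Fin 2) (Fin 2) ℤ).mulVec v
  invFun v := (Θ⁻¹ : GL (Fin 2) ℤ).1.mulVec v
  left_inv v := by
    show (Θ⁻¹ : GL (Fin 2) ℤ).1.mulVec ((Θ : Matrix (Fin 2) (Fin 2) ℤ).mulVec v) = v
    rw [Matrix.mulVec_mulVec, ← Units.val_mul, inv_mul_cancel, Units.val_one, Matrix.one_mulVec]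
  right_inv v := by
    show (Θ : Matrix (Fin 2) (Fin 2) ℤ).mulVec ((Θ⁻¹ : GL (Fin 2) ℤ).1.mulVec v) = v
    rw [Matrix.mulVec_mulVec, ← Units.val_mul, mul_inv_cancel, Units.val_one, Matrix.one_mulVec]
  map_add' v w := by simpa using Matrix.mulVec_add (Θ : Matrix (Fin 2) (Fin 2) ℤ) v w

/-- `π_Θ = ℤ² ⋊_Θ ℤ`, the semidirect product in which the generator of `ℤ`
acts on `ℤ²` by the matrix `Θ`. -/
abbrev piTheta (Θ : GL (Fin 2) ℤ) : Type :=
  SemidirectProduct (Multiplicative (Fin 2 → ℤ)) (Multiplicative ℤ)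
    (zpowersHom (MulAut (Multiplicative (Fin 2 → ℤ)))
      (AddEquiv.toMultiplicative (thetaAddAut Θ)))



open Matrix
open scoped commutatorElement


private lemma det_swap2 : (!![0,1;1,0] : Matrix (Fin 2) (Fin 2) ℤ).det = -1 := by
  norm_num [Matrix.det_fin_two_of]

private lemma det_tri (u : ℤ) : (!![1,u;0,1] : Matrix (Fin 2) (Fin 2) ℤ).det = 1 := by
  norm_num [Matrix.det_fin_two_of]

private lemma det_tri' (u : ℤ) : (!![1,0;u,1] : Matrix (Fin 2) (Fin 2) ℤ).det = 1 := by
  norm_num [Matrix.det_fin_two_of]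

private lemma isUnit_swap2 : IsUnit (!![0,1;1,0] : Matrix (Fin 2) (Fin 2) ℤ).det :=
  Int.isUnit_iff.2 (Or.inr det_swap2)

private lemma isUnit_tri (u : ℤ) : IsUnit (!![1,u;0,1] : Matrix (Fin 2) (Fin 2) ℤ).det := by
  rw [det_tri]; exact isUnit_one

private lemma isUnit_tri' (u : ℤ) : IsUnit (!![1,0;u,1] : Matrix (Fin 2) (Fin 2) ℤ).det := by
  rw [det_tri']; exact isUnit_one

private lemma emod_natAbs_lt {b α : ℤ} (hα : α ≠ 0) (h : ¬ α ∣ b) :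
    (b % α) ≠ 0 ∧ (b % α).natAbs < α.natAbs := by
  constructor
  · intro h0; exact h (Int.dvd_of_emod_eq_zero h0)
  · have h1 : 0 ≤ b % α := Int.emod_nonneg b hα
    have h2 : b % α < |α| := by rw [Int.abs_eq_natAbs]; exact Int.emod_lt b hα
    rw [Int.abs_eq_natAbs] at h2
    omega

lemma snf2_aux : ∀ (k : ℕ) (R : Matrix (Fin 2) (Fin 2) ℤ), R 0 0 ≠ 0 → (R 0 0).natAbs ≤ k →
    ∃ U V : Matrix (Fin 2) (Fin 2) ℤ, IsUnit U.det ∧ IsUnit V.det ∧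
      ∃ s t : ℤ, s ∣ t ∧ U * R * V = !![s, 0; 0, t] := by
  intro k
  induction k using Nat.strong_induction_on with
  | _ k IH =>
  intro R hα hk
  obtain ⟨α, b, c, d, rfl⟩ : ∃ α b c d, R = !![α, b; c, d] :=
    ⟨R 0 0, R 0 1, R 1 0, R 1 1, Matrix.eta_fin_two R⟩
  simp only [Matrix.cons_val', Matrix.cons_val_zero, Matrix.empty_val',
    Matrix.cons_val_fin_one, Matrix.of_apply] at hα hk
  by_cases hb : α ∣ b
  · by_cases hc : α ∣ c
    · -- clear row and column
      obtain ⟨x, rfl⟩ := hb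
      obtain ⟨y, rfl⟩ := hc
      set β := d - y * (α * x) with hβ
      have key : !![1, 0; -y, 1] * !![α, α * x; α * y, d] * !![1, -x; 0, 1]
          = !![α, 0; 0, β] := by
        ext i j
        fin_cases i <;> fin_cases j <;>
          simp [Matrix.mul_apply, Fin.sum_univ_two, hβ] <;> ring
      by_cases hdvd : α ∣ β
      · exact ⟨_, _, isUnit_tri' (-y), isUnit_tri (-x), α, β, hdvd, key⟩
      · -- reduce
        obtain ⟨hr0, hrlt⟩ := emod_natAbs_lt hα hdvd
        set q := β / α with hq
        set r := β % α with hr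
        have hrval : r = β - α * q := by rw [hr, hq, Int.emod_def]
        have key2 : (!![1,1;0,1] * !![1, 0; -y, 1]) * !![α, α * x; α * y, d]
            * (!![1, -x; 0, 1] * (!![1, -q; 0, 1] * !![0,1;1,0]))
            = !![r, α; β, 0] := by
          ext i j
          fin_cases i <;> fin_cases j <;>
            simp [Matrix.mul_apply, Fin.sum_univ_two, hrval, hβ] <;> ring
        obtain ⟨U, V, hU, hV, s, t, hst, hUV⟩ :=
          IH r.natAbs (lt_of_lt_of_le hrlt hk) !![r, α; β, 0] (by simpa using hr0) (by simp)
        refine ⟨U * (!![1,1;0,1] * !![1, 0; -y, 1]),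
          !![1, -x; 0, 1] * (!![1, -q; 0, 1] * !![0,1;1,0]) * V, ?_, ?_, s, t, hst, ?_⟩
        · rw [Matrix.det_mul, Matrix.det_mul]
          exact hU.mul ((isUnit_tri 1).mul (isUnit_tri' (-y)))
        · rw [Matrix.det_mul, Matrix.det_mul, Matrix.det_mul]
          exact ((isUnit_tri (-x)).mul ((isUnit_tri (-q)).mul isUnit_swap2)).mul hV
        · rw [show U * (!![1,1;0,1] * !![1, 0; -y, 1]) * !![α, α * x; α * y, d] *
            (!![1, -x; 0, 1] * (!![1, -q; 0, 1] * !![0,1;1,0]) * V)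
            = U * ((!![1,1;0,1] * !![1, 0; -y, 1]) * !![α, α * x; α * y, d] *
              (!![1, -x; 0, 1] * (!![1, -q; 0, 1] * !![0,1;1,0]))) * V by
              simp only [Matrix.mul_assoc], key2, hUV]
    · -- reduce using row op on c
      obtain ⟨hr0, hrlt⟩ := emod_natAbs_lt hα hc
      set q := c / α with hq
      set r := c % α with hr
      have hrval : r = c - α * q := by rw [hr, hq, Int.emod_def]
      have key : (!![0,1;1,0] * !![1, 0; -q, 1]) * !![α, b; c, d] = !![r, d - q * b; α, b] := by
        ext i j
        fin_cases i <;> fin_cases j <;>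
          simp [Matrix.mul_apply, Fin.sum_univ_two, hrval] <;> ring
      obtain ⟨U, V, hU, hV, s, t, hst, hUV⟩ :=
        IH r.natAbs (lt_of_lt_of_le hrlt hk) !![r, d - q*b; α, b] (by simpa using hr0) (by simp)
      refine ⟨U * (!![0,1;1,0] * !![1, 0; -q, 1]), V, ?_, hV, s, t, hst, ?_⟩
      · rw [Matrix.det_mul, Matrix.det_mul]
        exact hU.mul (isUnit_swap2.mul (isUnit_tri' (-q)))
      · rw [show U * (!![0,1;1,0] * !![1, 0; -q, 1]) * !![α, b; c, d] * V
          = U * ((!![0,1;1,0] * !![1, 0; -q, 1]) * !![α, b; c, d]) * V by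
            simp only [Matrix.mul_assoc], key, hUV]
  · -- reduce using column op on b
    obtain ⟨hr0, hrlt⟩ := emod_natAbs_lt hα hb
    set q := b / α with hq
    set r := b % α with hr
    have hrval : r = b - α * q := by rw [hr, hq, Int.emod_def]
    have key : !![α, b; c, d] * (!![1, -q; 0, 1] * !![0,1;1,0]) = !![r, α; d - c * q, c] := by
      ext i j
      fin_cases i <;> fin_cases j <;>
        simp [Matrix.mul_apply, Fin.sum_univ_two, hrval] <;> ring
    obtain ⟨U, V, hU, hV, s, t, hst, hUV⟩ :=
      IH r.natAbs (lt_of_lt_of_le hrlt hk) !![r, α; d - c*q, c] (by simpa using hr0) (by simp)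
    refine ⟨U, !![1, -q; 0, 1] * !![0,1;1,0] * V, hU, ?_, s, t, hst, ?_⟩
    · rw [Matrix.det_mul, Matrix.det_mul]
      exact ((isUnit_tri (-q)).mul isUnit_swap2).mul hV
    · rw [show U * !![α, b; c, d] * (!![1, -q; 0, 1] * !![0,1;1,0] * V)
        = U * (!![α, b; c, d] * (!![1, -q; 0, 1] * !![0,1;1,0])) * V by
          simp only [Matrix.mul_assoc], key, hUV]

lemma snf2 (R : Matrix (Fin 2) (Fin 2) ℤ) (hdet : R.det ≠ 0) :
    ∃ U V : Matrix (Fin 2) (Fin 2) ℤ, IsUnit U.det ∧ IsUnit V.det ∧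
      ∃ s t : ℤ, s ∣ t ∧ U * R * V = !![s, 0; 0, t] := by
  by_cases h00 : R 0 0 ≠ 0
  · exact snf2_aux (R 0 0).natAbs R h00 le_rfl
  · push_neg at h00
    have h01 : R 0 1 ≠ 0 := by
      intro h01
      rw [Matrix.det_fin_two, h00, h01] at hdet; simp at hdet
    have key : R * !![0,1;1,0] = !![R 0 1, R 0 0; R 1 1, R 1 0] := by
      ext i j
      fin_cases i <;> fin_cases j <;>
        simp [Matrix.mul_apply, Fin.sum_univ_two]
    obtain ⟨U, V, hU, hV, s, t, hst, hUV⟩ :=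
      snf2_aux (R 0 1).natAbs !![R 0 1, R 0 0; R 1 1, R 1 0] (by simpa using h01) (by simp)
    refine ⟨U, !![0,1;1,0] * V, hU, ?_, s, t, hst, ?_⟩
    · rw [Matrix.det_mul]
      exact isUnit_swap2.mul hV
    · rw [show U * R * (!![0,1;1,0] * V) = U * (R * !![0,1;1,0]) * V by
        simp only [Matrix.mul_assoc], key, hUV]
/-- gcd of the four entries of a 2×2 integer matrix (column grouping). -/
def g4 (R : Matrix (Fin 2) (Fin 2) ℤ) : ℕ :=
  Nat.gcd (Int.gcd (R 0 0) (R 1 0)) (Int.gcd (R 0 1) (R 1 1))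

lemma g4_dvd (R : Matrix (Fin 2) (Fin 2) ℤ) (i j : Fin 2) : ((g4 R : ℕ) : ℤ) ∣ R i j := by
  have h1 : (g4 R : ℤ) ∣ (Int.gcd (R 0 0) (R 1 0) : ℤ) :=
    Int.natCast_dvd_natCast.2 (Nat.gcd_dvd_left _ _)
  have h2 : (g4 R : ℤ) ∣ (Int.gcd (R 0 1) (R 1 1) : ℤ) :=
    Int.natCast_dvd_natCast.2 (Nat.gcd_dvd_right _ _)
  fin_cases i <;> fin_cases j
  · exact h1.trans (Int.gcd_dvd_left _ _)
  · exact h2.trans (Int.gcd_dvd_left _ _)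
  · exact h1.trans (Int.gcd_dvd_right _ _)
  · exact h2.trans (Int.gcd_dvd_right _ _)

lemma dvd_g4 {R : Matrix (Fin 2) (Fin 2) ℤ} {m : ℕ} (h : ∀ i j, ((m : ℕ) : ℤ) ∣ R i j) :
    m ∣ g4 R := by
  refine Nat.dvd_gcd ?_ ?_ <;>
  · rw [← Int.natCast_dvd_natCast]
    exact Int.dvd_coe_gcd (h _ _) (h _ _)

lemma g4_mul_dvd (U R V : Matrix (Fin 2) (Fin 2) ℤ) : g4 R ∣ g4 (U * R * V) := by
  apply dvd_g4
  intro i j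
  rw [Matrix.mul_apply]
  refine Finset.dvd_sum fun l _ => ?_
  rw [Matrix.mul_apply]
  rw [Finset.sum_mul]
  refine Finset.dvd_sum fun k _ => ?_
  exact Dvd.dvd.mul_right (Dvd.dvd.mul_left (g4_dvd R k l) _) _

lemma g4_unit_mul (U R V : Matrix (Fin 2) (Fin 2) ℤ) (hU : IsUnit U.det) (hV : IsUnit V.det) :
    g4 (U * R * V) = g4 R := by
  refine Nat.dvd_antisymm ?_ (g4_mul_dvd U R V)
  have : R = U⁻¹ * (U * R * V) * V⁻¹ := by
    rw [Matrix.mul_assoc (U⁻¹), Matrix.mul_assoc (U * R), Matrix.mul_nonsing_inv _ hV,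
      Matrix.mul_one, ← Matrix.mul_assoc, Matrix.nonsing_inv_mul _ hU, Matrix.one_mul]
  calc g4 (U * R * V) ∣ g4 (U⁻¹ * (U * R * V) * V⁻¹) := g4_mul_dvd _ _ _
    _ = g4 R := by rw [← this]

lemma g4_diag (s t : ℤ) : g4 !![s, 0; 0, t] = Int.gcd s t := by
  simp [g4, Int.gcd]

/-- The cokernel of `mulVec R` for a nonsingular 2×2 integer matrix. -/
lemma coker_equiv (R : Matrix (Fin 2) (Fin 2) ℤ) (hdet : R.det ≠ 0)
    (L : AddSubgroup (Fin 2 → ℤ)) (hL : ∀ v, v ∈ L ↔ ∃ w, R.mulVec w = v) :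
    Nonempty (((Fin 2 → ℤ) ⧸ L) ≃+ ZMod (R.det.natAbs / g4 R) × ZMod (g4 R)) := by
  obtain ⟨U, V, hU, hV, s, t, hst, hUV⟩ := snf2 R hdet
  have hdetD : U.det * R.det * V.det = s * t := by
    rw [← Matrix.det_mul, ← Matrix.det_mul, hUV, Matrix.det_fin_two_of]; ring
  have hnatAbs : R.det.natAbs = s.natAbs * t.natAbs := by
    have h1 : (U.det * R.det * V.det).natAbs = R.det.natAbs := by
      rcases Int.isUnit_iff.1 hU with h | h <;> rcases Int.isUnit_iff.1 hV with h' | h' <;>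
        simp [h, h', Int.natAbs_mul]
    rw [← h1, hdetD, Int.natAbs_mul]
  have hs0 : s ≠ 0 := by
    rintro rfl
    rw [zero_mul] at hdetD
    rcases Int.isUnit_iff.1 hU with h | h <;> rcases Int.isUnit_iff.1 hV with h' | h' <;>
      rw [h, h'] at hdetD <;> omega
  have hg : g4 R = s.natAbs := by
    rw [← g4_unit_mul U R V hU hV, hUV, g4_diag, Int.gcd_eq_natAbs_left hst]
  have hdiv : R.det.natAbs / g4 R = t.natAbs := by
    rw [hnatAbs, hg, Nat.mul_div_cancel_left _ (by positivity)]
  rw [hdiv, hg]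
  have hUR : U * R = !![s, 0; 0, t] * V⁻¹ := by
    rw [← hUV, Matrix.mul_assoc, Matrix.mul_nonsing_inv _ hV, Matrix.mul_one]
  have hRV : R * V = U⁻¹ * !![s, 0; 0, t] := by
    rw [← hUV, ← Matrix.mul_assoc, ← Matrix.mul_assoc, Matrix.nonsing_inv_mul _ hU,
      Matrix.one_mul]
  have hDmul : ∀ x y : ℤ, (!![s, 0; 0, t]).mulVec ![x, y] = ![s * x, t * y] := by
    intro x y
    funext i
    fin_cases i <;> simp [Matrix.mulVec, dotProduct, Fin.sum_univ_two]
  have veta : ∀ z : Fin 2 → ℤ, z = ![z 0, z 1] := by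
    intro z; funext i; fin_cases i <;> simp
  let ψ : (Fin 2 → ℤ) →+ ZMod t.natAbs × ZMod s.natAbs :=
    { toFun := fun v => (((U.mulVec v 1 : ℤ) : ZMod t.natAbs),
        ((U.mulVec v 0 : ℤ) : ZMod s.natAbs))
      map_zero' := by simp
      map_add' := fun v w => by simp [Matrix.mulVec_add, Prod.ext_iff] }
  have hψ : ∀ v, ψ v = (((U.mulVec v 1 : ℤ) : ZMod t.natAbs),
      ((U.mulVec v 0 : ℤ) : ZMod s.natAbs)) := fun _ => rfl
  have hsurj : Function.Surjective ψ := by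
    rintro ⟨p, q⟩
    obtain ⟨x, hx⟩ := ZMod.intCast_surjective p
    obtain ⟨y, hy⟩ := ZMod.intCast_surjective q
    refine ⟨U⁻¹.mulVec ![y, x], ?_⟩
    rw [hψ, Matrix.mulVec_mulVec, Matrix.mul_nonsing_inv _ hU]
    simp [hx, hy]
  have hker : L = ψ.ker := by
    ext v
    rw [AddMonoidHom.mem_ker, hL, hψ, Prod.ext_iff]
    simp only [Prod.fst_zero, Prod.snd_zero, ZMod.intCast_zmod_eq_zero_iff_dvd,
      Int.natAbs_dvd]
    constructor
    · rintro ⟨w, rfl⟩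
      have h1 : U.mulVec (R.mulVec w) = ![s * (V⁻¹.mulVec w 0), t * (V⁻¹.mulVec w 1)] := by
        rw [Matrix.mulVec_mulVec, hUR, ← Matrix.mulVec_mulVec, veta (V⁻¹.mulVec w), hDmul]
        simp
      rw [h1]
      constructor
      · simp [Dvd.intro _ rfl]
      · simp [Dvd.intro _ rfl]
    · rintro ⟨h1, h2⟩
      obtain ⟨y, hy⟩ := h1
      obtain ⟨x, hx⟩ := h2
      refine ⟨V.mulVec ![x, y], ?_⟩
      rw [Matrix.mulVec_mulVec, hRV, ← Matrix.mulVec_mulVec, hDmul, ← hx, ← hy,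
        ← veta (U.mulVec v), Matrix.mulVec_mulVec, Matrix.nonsing_inv_mul _ hU]
      simp
  exact ⟨(QuotientAddGroup.quotientAddEquivOfEq hker).trans
    (QuotientAddGroup.quotientKerEquivOfSurjective ψ hsurj)⟩

section PartA

variable (Θ : GL (Fin 2) ℤ)

/-- The matrix `Θ - 1`. -/
def Mmat : Matrix (Fin 2) (Fin 2) ℤ := (Θ : Matrix (Fin 2) (Fin 2) ℤ) - 1

/-- The image lattice `(Θ - 1)ℤ²`. -/
def Lsub : AddSubgroup (Fin 2 → ℤ) :=
  AddMonoidHom.range ((Matrix.mulVecLin (Mmat Θ)).toAddMonoidHom)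

lemma mem_Lsub (v : Fin 2 → ℤ) : v ∈ Lsub Θ ↔ ∃ w, (Mmat Θ).mulVec w = v := by
  simp [Lsub, Matrix.mulVecLin_apply]

lemma Mmat_mulVec (v : Fin 2 → ℤ) : (Mmat Θ).mulVec v = thetaAddAut Θ v - v := by
  show (Mmat Θ).mulVec v = (Θ : Matrix (Fin 2) (Fin 2) ℤ).mulVec v - v
  rw [Mmat, Matrix.sub_mulVec, Matrix.one_mulVec]

lemma abelianization_equiv :
    Nonempty (Abelianization (piTheta Θ) ≃*
      Multiplicative (((Fin 2 → ℤ) ⧸ Lsub Θ) × ℤ)) := by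
  classical
  set e := thetaAddAut Θ with he
  set te := AddEquiv.toMultiplicative e with hte
  set L := Lsub Θ with hLdef
  set Q := (Fin 2 → ℤ) ⧸ L with hQ
  -- basic quotient facts
  have hmk : ∀ v : Fin 2 → ℤ, ((e v : Fin 2 → ℤ) : Q) = (v : Q) := by
    intro v
    rw [QuotientAddGroup.eq]
    rw [hLdef, mem_Lsub]
    exact ⟨-v, by rw [Matrix.mulVec_neg, Mmat_mulVec]; abel⟩
  have hmk' : ∀ v : Fin 2 → ℤ, ((e.symm v : Fin 2 → ℤ) : Q) = (v : Q) := by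
    intro v
    have := hmk (e.symm v)
    rw [e.apply_symm_apply] at this
    exact this.symm
  have htev : ∀ v : Fin 2 → ℤ, te (Multiplicative.ofAdd v) = Multiplicative.ofAdd (e v) :=
    fun _ => rfl
  have htev' : ∀ v : Fin 2 → ℤ,
      te⁻¹ (Multiplicative.ofAdd v) = Multiplicative.ofAdd (e.symm v) := fun _ => rfl
  have key : ∀ (k : ℤ) (v : Fin 2 → ℤ),
      ((Multiplicative.toAdd ((te ^ k) (Multiplicative.ofAdd v)) : Fin 2 → ℤ) : Q)
        = (v : Q) := by
    intro k
    induction k using Int.induction_on with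
    | zero => intro v; simp
    | succ n ih =>
      intro v
      have h1 : (te ^ ((n : ℤ) + 1)) (Multiplicative.ofAdd v)
          = (te ^ (n : ℤ)) (te (Multiplicative.ofAdd v)) := by
        rw [_root_.zpow_add_one]; rfl
      rw [h1, htev, ih (e v), hmk]
    | pred n ih =>
      intro v
      have h1 : (te ^ (-(n : ℤ) - 1)) (Multiplicative.ofAdd v)
          = (te ^ (-(n : ℤ))) (te⁻¹ (Multiplicative.ofAdd v)) := by
        rw [_root_.zpow_sub_one]; rfl
      rw [h1, htev', ih (e.symm v), hmk']
  -- the forward homomorphism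
  let j : (Fin 2 → ℤ) →+ Q × ℤ := (QuotientAddGroup.mk' L).prod 0
  let f₁ : Multiplicative (Fin 2 → ℤ) →* Multiplicative (Q × ℤ) :=
    AddMonoidHom.toMultiplicative j
  let f₂ : Multiplicative ℤ →* Multiplicative (Q × ℤ) :=
    AddMonoidHom.toMultiplicative ((0 : ℤ →+ Q).prod (AddMonoidHom.id ℤ))
  have hcompat : ∀ g : Multiplicative ℤ,
      f₁.comp (MulEquiv.toMonoidHom ((zpowersHom (MulAut (Multiplicative (Fin 2 → ℤ))) te) g))
        = (MulEquiv.toMonoidHom (MulAut.conj (f₂ g))).comp f₁ := by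
    intro g
    refine MonoidHom.ext fun n => ?_
    have hconj : ∀ x : Multiplicative (Q × ℤ), (MulAut.conj (f₂ g)) x = x := by
      intro x
      simp [MulAut.conj, mul_comm]
    simp only [MonoidHom.comp_apply, MulEquiv.coe_toMonoidHom, hconj, zpowersHom_apply]
    show f₁ ((te ^ (Multiplicative.toAdd g)) n) = f₁ n
    have : f₁ = fun m : Multiplicative (Fin 2 → ℤ) =>
        Multiplicative.ofAdd (((Multiplicative.toAdd m : Fin 2 → ℤ) : Q), (0 : ℤ)) := rfl
    rw [this]
    simp only []
    rw [show ((te ^ (Multiplicative.toAdd g)) n) = ((te ^ (Multiplicative.toAdd g))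
      (Multiplicative.ofAdd (Multiplicative.toAdd n))) by rfl]
    rw [key (Multiplicative.toAdd g) (Multiplicative.toAdd n)]
  let f : piTheta Θ →* Multiplicative (Q × ℤ) := SemidirectProduct.lift f₁ f₂ hcompat
  let F : Abelianization (piTheta Θ) →* Multiplicative (Q × ℤ) := Abelianization.lift f
  -- the reverse homomorphism
  let j₀ : (Fin 2 → ℤ) →+ Additive (Abelianization (piTheta Θ)) :=
    MonoidHom.toAdditiveRight (Abelianization.of.comp SemidirectProduct.inl)
  have hj₀ : ∀ v ∈ L, j₀ v = 0 := by
    intro v hv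
    rw [hLdef, mem_Lsub] at hv
    obtain ⟨w, rfl⟩ := hv
    show Abelianization.of (SemidirectProduct.inl
      (Multiplicative.ofAdd ((Mmat Θ).mulVec w))) = 1
    have hcomm : ⁅(SemidirectProduct.inr (Multiplicative.ofAdd (1 : ℤ)) : piTheta Θ),
         (SemidirectProduct.inl (Multiplicative.ofAdd w) : piTheta Θ)⁆
        = (SemidirectProduct.inl (Multiplicative.ofAdd ((Mmat Θ).mulVec w)) : piTheta Θ) := by
      rw [commutatorElement_def,
        show (SemidirectProduct.inr (Multiplicative.ofAdd (1:ℤ)) : piTheta Θ)⁻¹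
          = SemidirectProduct.inr ((Multiplicative.ofAdd (1:ℤ))⁻¹) from (map_inv _ _).symm,
        ← SemidirectProduct.inl_aut,
        show (SemidirectProduct.inl (Multiplicative.ofAdd w) : piTheta Θ)⁻¹
          = SemidirectProduct.inl ((Multiplicative.ofAdd w)⁻¹) from (map_inv _ _).symm,
        ← _root_.map_mul]
      congr 1
      rw [zpowersHom_apply, toAdd_ofAdd, zpow_one,
        show AddEquiv.toMultiplicative (thetaAddAut Θ) = te from rfl, htev]
      rw [show (Multiplicative.ofAdd w)⁻¹ = Multiplicative.ofAdd (-w) from rfl]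
      rw [show Multiplicative.ofAdd (e w) * Multiplicative.ofAdd (-w)
        = Multiplicative.ofAdd (e w + -w) from rfl]
      rw [Mmat_mulVec, sub_eq_add_neg]
    rw [← hcomm, map_commutatorElement]
    exact commutatorElement_eq_one_iff_commute.2 (mul_comm _ _)
  let j₁ : Q →+ Additive (Abelianization (piTheta Θ)) := QuotientAddGroup.lift L j₀ hj₀
  let j₂ : ℤ →+ Additive (Abelianization (piTheta Θ)) :=
    MonoidHom.toAdditiveRight (Abelianization.of.comp SemidirectProduct.inr)
  let J : Multiplicative (Q × ℤ) →* Abelianization (piTheta Θ) :=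
    AddMonoidHom.toMultiplicativeLeft (j₁.coprod j₂)
  have h1 : J.comp F = MonoidHom.id _ := by
    apply Abelianization.hom_ext
    apply SemidirectProduct.hom_ext
    · apply MonoidHom.ext
      intro n
      show J (F (Abelianization.of (SemidirectProduct.inl n)))
        = Abelianization.of (SemidirectProduct.inl n)
      rw [show F (Abelianization.of (SemidirectProduct.inl n))
        = f (SemidirectProduct.inl n) from Abelianization.lift_apply_of f _]
      rw [show f (SemidirectProduct.inl n) = f₁ n from SemidirectProduct.lift_inl f₁ f₂ hcompat n]
      show Additive.toMul (j₁ ((Multiplicative.toAdd n : Fin 2 → ℤ) : Q) + j₂ 0)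
        = Abelianization.of (SemidirectProduct.inl n)
      rw [map_zero, add_zero]
      rfl
    · apply MonoidHom.ext
      intro k
      show J (F (Abelianization.of (SemidirectProduct.inr k)))
        = Abelianization.of (SemidirectProduct.inr k)
      rw [show F (Abelianization.of (SemidirectProduct.inr k))
        = f (SemidirectProduct.inr k) from Abelianization.lift_apply_of f _]
      rw [show f (SemidirectProduct.inr k) = f₂ k from SemidirectProduct.lift_inr f₁ f₂ hcompat k]
      show Additive.toMul (j₁ 0 + j₂ (Multiplicative.toAdd k))
        = Abelianization.of (SemidirectProduct.inr k)
      rw [map_zero, zero_add]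
      rfl
  have h2 : F.comp J = MonoidHom.id _ := by
    apply MonoidHom.ext
    intro x
    rcases hx : Multiplicative.toAdd x with ⟨q, k⟩
    have hx' : x = Multiplicative.ofAdd (q, k) := by rw [← hx]; rfl
    rw [hx']
    induction q using QuotientAddGroup.induction_on with
    | H v =>
      show F (J (Multiplicative.ofAdd ((v : Q), k))) = Multiplicative.ofAdd ((v : Q), k)
      have hJ : J (Multiplicative.ofAdd ((v : Q), k))
          = Abelianization.of (SemidirectProduct.inl (Multiplicative.ofAdd v))
            * Abelianization.of (SemidirectProduct.inr (Multiplicative.ofAdd k)) := rfl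
      rw [hJ, _root_.map_mul]
      rw [show F (Abelianization.of (SemidirectProduct.inl (Multiplicative.ofAdd v)))
        = f₁ (Multiplicative.ofAdd v) by
          rw [Abelianization.lift_apply_of]; exact SemidirectProduct.lift_inl f₁ f₂ hcompat _]
      rw [show F (Abelianization.of (SemidirectProduct.inr (Multiplicative.ofAdd k)))
        = f₂ (Multiplicative.ofAdd k) by
          rw [Abelianization.lift_apply_of]; exact SemidirectProduct.lift_inr f₁ f₂ hcompat _]
      show Multiplicative.ofAdd (((v : Q) + 0, (0 : ℤ) + k)) = Multiplicative.ofAdd ((v : Q), k)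
      rw [add_zero, zero_add]
  exact ⟨MonoidHom.toMulEquiv F J h1 h2⟩

end PartA

/-- for `Θ = ((a, c), (b, d)) ∈ GL(2,ℤ)`, with
`Δ₁ = det(Θ − I₂) = (a−1)(d−1) − bc ≠ 0` and `Δ₂ = gcd(a−1, b, c, d−1)`,
the abelianization of `π_Θ = ℤ² ⋊_Θ ℤ` is `ℤ ⊕ ℤ/(|Δ₁|/Δ₂)ℤ ⊕ ℤ/Δ₂ℤ`. -/
theorem stmt11 (Θ : GL (Fin 2) ℤ) (a b c d : ℤ)
    (ha : (Θ : Matrix (Fin 2) (Fin 2) ℤ) 0 0 = a)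
    (hc : (Θ : Matrix (Fin 2) (Fin 2) ℤ) 0 1 = c)
    (hb : (Θ : Matrix (Fin 2) (Fin 2) ℤ) 1 0 = b)
    (hd : (Θ : Matrix (Fin 2) (Fin 2) ℤ) 1 1 = d)
    (hΔ₁ : (a - 1) * (d - 1) - b * c ≠ 0) :
    Nonempty (Abelianization (piTheta Θ) ≃*
      Multiplicative (ℤ ×
        ZMod (((a - 1) * (d - 1) - b * c).natAbs /
          Nat.gcd (Int.gcd (a - 1) b) (Int.gcd c (d - 1))) ×
        ZMod (Nat.gcd (Int.gcd (a - 1) b) (Int.gcd c (d - 1))))) := by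
  have h00 : Mmat Θ 0 0 = a - 1 := by simp [Mmat, Matrix.sub_apply, Matrix.one_apply, ha]
  have h01 : Mmat Θ 0 1 = c := by simp [Mmat, Matrix.sub_apply, Matrix.one_apply, hc]
  have h10 : Mmat Θ 1 0 = b := by simp [Mmat, Matrix.sub_apply, Matrix.one_apply, hb]
  have h11 : Mmat Θ 1 1 = d - 1 := by simp [Mmat, Matrix.sub_apply, Matrix.one_apply, hd]
  have hdet : (Mmat Θ).det = (a - 1) * (d - 1) - b * c := by
    rw [Matrix.det_fin_two, h00, h01, h10, h11]; ring
  have hg : g4 (Mmat Θ) = Nat.gcd (Int.gcd (a - 1) b) (Int.gcd c (d - 1)) := by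
    rw [g4, h00, h01, h10, h11]
  have hdet0 : (Mmat Θ).det ≠ 0 := by rw [hdet]; exact hΔ₁
  obtain ⟨eAb⟩ := abelianization_equiv Θ
  obtain ⟨eQ⟩ := coker_equiv (Mmat Θ) hdet0 (Lsub Θ) (mem_Lsub Θ)
  rw [← hdet, ← hg]
  exact ⟨eAb.trans (AddEquiv.toMultiplicative
    ((eQ.prodCongr (AddEquiv.refl ℤ)).trans AddEquiv.prodComm))⟩
end
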